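/- Let X be the symmetric 2×2×2 tensor with entries a = 0, b = 1, c = 1, d = 0 (i.e., X₁₁₁ = 0, X₂₂₂ = 0, and all mixed entries equal 1). Then the vector y ∈ ℝ² with y₁ = y₂ = (3/4)^{1/3} is a global minimizer of ‖X − y⊗y⊗y‖² over y ∈ ℝ², with minimum value 3/2. -/

import Mathlib

lemma best_symmetric_rank_one_key (s d : ℝ) :
    0 ≤ (s^3-6)^2 + 3*s^4*d^2 + 12*s*d^2 + 3*s^2*d^4 + d^6 := by
  rcases le_or_gt 0 s with hs | hs
  · have h1 : 0 ≤ s * d^2 := mul_nonneg hs (sq_nonneg d)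
    nlinarith [sq_nonneg (s^3-6), sq_nonneg (s^2*d), sq_nonneg (s*d^2), sq_nonneg (d^3)]
  · have hu : (0:ℝ) ≤ -s := by linarith
    have h2 : (0:ℝ) ≤ (-s-1)^2 * (2*(-s)+1) := mul_nonneg (sq_nonneg _) (by linarith)
    have h3 : (0:ℝ) ≤ (d^2-4)^2 * (d^2+2) := mul_nonneg (sq_nonneg _) (by positivity)
    nlinarith [sq_nonneg (-s - d^2), sq_nonneg (s^2*d), sq_nonneg (s*d^2), sq_nonneg (s^3),
      pow_nonneg hu 3, h2, h3]

theorem best_symmetric_rank_one_example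
    (X : Fin 2 → Fin 2 → Fin 2 → ℝ)
    (hX : X = fun i j k => if i = j ∧ j = k then 0 else 1)
    (y : Fin 2 → ℝ) (hy : y = fun _ => ((3 : ℝ) / 4) ^ ((1 : ℝ) / 3)) :
    (∑ i, ∑ j, ∑ k, (X i j k - y i * y j * y k) ^ 2 = 3 / 2) ∧
      ∀ w : Fin 2 → ℝ,
        3 / 2 ≤ ∑ i, ∑ j, ∑ k, (X i j k - w i * w j * w k) ^ 2 := by
  subst hX hy
  constructor
  · set t : ℝ := ((3 : ℝ) / 4) ^ ((1 : ℝ) / 3) with htdef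
    have ht : t ^ 3 = 3 / 4 := by
      rw [htdef, ← Real.rpow_natCast (((3:ℝ)/4) ^ ((1:ℝ)/3)) 3,
        ← Real.rpow_mul (by norm_num)]
      norm_num
    simp only [Fin.sum_univ_two]
    norm_num
    linear_combination (8 * t ^ 3 - 6) * ht
  · intro w
    simp only [Fin.sum_univ_two]
    norm_num
    nlinarith [best_symmetric_rank_one_key (w 0 + w 1) (w 0 - w 1)]
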